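/- Let D◇ be an r-equireplicate and linear design of order k on V = {1,…,n}, let X₁,…,Xₙ be i.i.d., and let h be a symmetric measurable kernel of k arguments with σ_k² < ∞. Then the variance of the incomplete U-statistic is Var U_{n,D◇}^{(k)} = (k²(r−1)σ₁² + k·σ_k²)/(n·r), and this variance is minimal among all incomplete U-statistics of order k with the same design size: for every design D' ⊆ B_k with |D'| = |D◇| one has Var U_{n,D◇}^{(k)} ≤ Var U_{n,D'}^{(k)}. -/

import Mathlib

open MeasureTheory ProbabilityTheory Filter Finset

namespace IUStat

/-- Degree of an index `v` in a design `D`: number of blocks containing `v`. -/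
def degree (D : Finset (Finset ℕ)) (v : ℕ) : ℕ := (D.filter (fun S => v ∈ S)).card

/-- Maximum degree of the hypergraph of a design on `V = {1,…,n}`. -/
def maxDegree (n : ℕ) (D : Finset (Finset ℕ)) : ℕ := (Finset.Icc 1 n).sup (degree D)

/-- Degree of a block `S` in the line graph `L(D)` (counting `S` itself). -/
def lineDegree (D : Finset (Finset ℕ)) (S : Finset ℕ) : ℕ :=
  (D.filter (fun S' => (S ∩ S').Nonempty)).card

/-- Maximum degree of the line graph of a design. -/
def maxLineDegree (D : Finset (Finset ℕ)) : ℕ := D.sup (lineDegree D)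

/-- The random variable `h(S)` obtained by applying the symmetric kernel `h` to the
sample values indexed by the (sorted) elements of the block `S`.  Since `h` is
symmetric in its arguments, the choice of the increasing enumeration is immaterial. -/
noncomputable def blockRV {Ω T : Type*} [MeasurableSpace T] {k : ℕ}
    (X : ℕ → Ω → T) (h : (Fin k → T) → ℝ) (S : Finset ℕ) : Ω → ℝ :=
  fun ω => h (fun j => X ((S.sort (· ≤ ·)).getD (j : ℕ) 0) ω)

/-- The incomplete U-statistic of design `D`. -/
noncomputable def ustat {Ω T : Type*} [MeasurableSpace T] {k : ℕ}
    (D : Finset (Finset ℕ)) (X : ℕ → Ω → T) (h : (Fin k → T) → ℝ) : Ω → ℝ :=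
  fun ω => (D.card : ℝ)⁻¹ * ∑ S ∈ D, blockRV X h S ω

/-- Covariance of two real random variables. -/
noncomputable def covRV {Ω : Type*} [MeasurableSpace Ω] (P : Measure Ω) (f g : Ω → ℝ) : ℝ :=
  ∫ ω, (f ω - ∫ x, f x ∂P) * (g ω - ∫ x, g x ∂P) ∂P

/-- Standard normal CDF. -/
noncomputable def Φ : ℝ → ℝ := fun z => ProbabilityTheory.cdf (gaussianReal 0 1) z

/-- `a mod m` with a remainder of zero relabeled as `m`. -/
def modr (a m : ℕ) : ℕ := if a % m = 0 then m else a % m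

/-- Unbiased sample variance of the collection `{h(S) : S ∈ D}`. -/
noncomputable def sampleVar {Ω T : Type*} [MeasurableSpace T] {k : ℕ}
    (D : Finset (Finset ℕ)) (X : ℕ → Ω → T) (h : (Fin k → T) → ℝ) : Ω → ℝ :=
  fun ω => ((D.card : ℝ) - 1)⁻¹ * ∑ S ∈ D, (blockRV X h S ω - ustat D X h ω) ^ 2

/-! ### Auxiliary material -/

section Aux

set_option linter.unusedSectionVars false

/-- Petal `i` of width `w` starting at base `a`. -/
def pet (a w i : ℕ) : Finset ℕ := Finset.Ico (a + i*w) (a + i*w + w)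

lemma pet_card (a w i : ℕ) : (pet a w i).card = w := by
  simp [pet]

lemma lb_of_mem_pet {a w i x : ℕ} (hx : x ∈ pet a w i) : a ≤ x :=
  le_trans (Nat.le_add_right _ _) (Finset.mem_Ico.mp hx).1

lemma ub_of_mem_pet {a w i M x : ℕ} (hi : i < M) (hx : x ∈ pet a w i) : x < a + M*w :=
  calc x < a + i*w + w := (Finset.mem_Ico.mp hx).2
    _ = a + (i+1)*w := by ring
    _ ≤ a + M*w := Nat.add_le_add_left (Nat.mul_le_mul_right _ hi) a

lemma pet_disj {a w i i' : ℕ} (hne : i ≠ i') : Disjoint (pet a w i) (pet a w i') := by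
  have aux : ∀ p q : ℕ, p < q → Disjoint (pet a w p) (pet a w q) := by
    intro p q hpq
    rw [Finset.disjoint_left]
    intro x hx hx'
    have h1 : x < a + p*w + w := (Finset.mem_Ico.mp hx).2
    have h2 : a + q*w ≤ x := (Finset.mem_Ico.mp hx').1
    have h3 : a + p*w + w ≤ a + q*w :=
      calc a + p*w + w = a + (p+1)*w := by ring
        _ ≤ a + q*w := Nat.add_le_add_left (Nat.mul_le_mul_right _ hpq) a
    exact absurd (lt_of_lt_of_le (lt_of_lt_of_le h1 h3) h2) (lt_irrefl x)
  rcases Nat.lt_or_ge i i' with hlt | hge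
  · exact aux i i' hlt
  · exact (aux i' i (lt_of_le_of_ne hge (Ne.symm hne))).symm

lemma inter_eq_core {A A' Pq Pr : Finset ℕ} (h1 : Disjoint Pq Pr) (h2 : Disjoint Pq A')
    (h3 : Disjoint A Pr) : (A ∪ Pq) ∩ (A' ∪ Pr) = A ∩ A' := by
  ext x
  simp only [Finset.mem_inter, Finset.mem_union]
  have d1 := Finset.disjoint_left.mp h1
  have d2 := Finset.disjoint_left.mp h2
  have d3 := Finset.disjoint_left.mp h3
  constructor
  · rintro ⟨h4|h4, h5|h5⟩
    · exact ⟨h4, h5⟩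
    · exact absurd h5 (fun hh => d3 h4 hh)
    · exact absurd h5 (fun hh => d2 h4 hh)
    · exact absurd h5 (fun hh => d1 h4 hh)
  · rintro ⟨h4, h5⟩; exact ⟨Or.inl h4, Or.inl h5⟩

lemma sum_ite_diag (M : ℕ) (x y : ℝ) :
    ∑ l ∈ Finset.range M, ∑ l' ∈ Finset.range M, (if l = l' then x else y)
      = M*x + ((M:ℝ)^2 - M)*y := by
  have inner : ∀ l ∈ Finset.range M,
      ∑ l' ∈ Finset.range M, (if l = l' then x else y) = (x - y) + M*y := by
    intro l hl
    have : ∀ l' : ℕ, (if l = l' then x else y) = (if l = l' then (x - y) else 0) + y := by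
      intro l'; split <;> ring
    simp only [this, Finset.sum_add_distrib, Finset.sum_ite_eq, hl, if_true,
      Finset.sum_const, Finset.card_range, nsmul_eq_mul]
  rw [Finset.sum_congr rfl inner, Finset.sum_const, Finset.card_range, nsmul_eq_mul]
  ring

lemma nonneg_of_nat_bound {d e : ℝ} (h : ∀ M : ℕ, e ≤ (M:ℝ) * d) : 0 ≤ d := by
  by_contra hd
  push_neg at hd
  obtain ⟨M, hM⟩ := exists_nat_gt (e / d)
  have h2 : (M:ℝ) * d < e := by
    have := (div_lt_iff_of_neg hd).mp hM
    linarith [this]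
  linarith [h M]

lemma idx_ne {j j' l l' M : ℕ} (hl : l < M) (hl' : l' < M) (hne : j ≠ j') :
    j*M + l ≠ j'*M + l' := by
  have aux : ∀ p q st t : ℕ, st < M → p < q → p*M + st ≠ q*M + t := by
    intro p q st t hs hpq heq
    have h1 : (p+1)*M = p*M + M := by ring
    have h2 : (p+1)*M ≤ q*M := Nat.mul_le_mul_right _ hpq
    have h3 : q*M ≤ q*M + t := Nat.le_add_right _ _
    omega
  rcases Nat.lt_or_ge j j' with hlt | hge
  · exact aux j j' l l' hl hlt
  · exact fun heq => aux j' j l' l hl' (lt_of_le_of_ne hge (Ne.symm hne)) heq.symm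

lemma degree_eq_sum (E : Finset (Finset ℕ)) (v : ℕ) :
    degree E v = ∑ S ∈ E, (if v ∈ S then 1 else 0) := by
  rw [degree, Finset.card_filter]

lemma sum_degree (n : ℕ) (E : Finset (Finset ℕ)) (hE : ∀ S ∈ E, S ⊆ Finset.Icc 1 n) :
    ∑ v ∈ Finset.Icc 1 n, degree E v = ∑ S ∈ E, S.card := by
  simp only [degree_eq_sum]
  rw [Finset.sum_comm]
  refine Finset.sum_congr rfl fun S hS => ?_
  rw [← Finset.card_filter, Finset.filter_mem_eq_inter, Finset.inter_eq_right.mpr (hE S hS)]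

lemma double_count (n : ℕ) (E : Finset (Finset ℕ)) (hE : ∀ S ∈ E, S ⊆ Finset.Icc 1 n) :
    ∑ S ∈ E, ∑ S' ∈ E, (S ∩ S').card = ∑ v ∈ Finset.Icc 1 n, (degree E v)^2 := by
  have hc : ∀ S ∈ E, ∀ S' ∈ E, (S ∩ S').card
      = ∑ v ∈ Finset.Icc 1 n, (if v ∈ S then 1 else 0) * (if v ∈ S' then 1 else 0) := by
    intro S hS S' hS'
    rw [← Finset.inter_eq_right.mpr ((Finset.inter_subset_left).trans (hE S hS)),
      ← Finset.filter_mem_eq_inter, Finset.card_filter]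
    refine Finset.sum_congr rfl fun v _ => ?_
    by_cases h1 : v ∈ S <;> by_cases h2 : v ∈ S' <;> simp [Finset.mem_inter, h1, h2]
  rw [Finset.sum_congr rfl (fun S hS => Finset.sum_congr rfl (fun S' hS' => hc S hS S' hS'))]
  rw [Finset.sum_congr rfl (fun S _ => Finset.sum_comm (s := E) (t := Finset.Icc 1 n)
    (f := fun S' v => (if v ∈ S then 1 else 0) * (if v ∈ S' then 1 else 0)))]
  rw [Finset.sum_comm]
  refine Finset.sum_congr rfl fun v _ => ?_
  rw [← Finset.sum_mul_sum, ← degree_eq_sum, sq]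

variable {Ω : Type*} [MeasurableSpace Ω] {P : Measure Ω} [IsProbabilityMeasure P]

lemma integrable_mul_of_memL2 {f g : Ω → ℝ} (hf : MemLp f 2 P) (hg : MemLp g 2 P) :
    Integrable (fun ω => f ω * g ω) P := by
  have h : MemLp (g • f) 1 P := hf.smul (φ := g) hg
  exact (memLp_one_iff_integrable.mp h).congr
    (Filter.Eventually.of_forall fun ω => by simp [Pi.smul_apply, smul_eq_mul, mul_comm])

lemma variance_weighted_sum {ι : Type*} (s : Finset ι) (f : ι → Ω → ℝ) (a : ι → ℝ)
    (hf : ∀ i ∈ s, MemLp (f i) 2 P) :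
    variance (fun ω => ∑ i ∈ s, a i * f i ω) P
      = ∑ i ∈ s, ∑ j ∈ s, a i * a j * covRV P (f i) (f j) := by
  classical
  have hfi : ∀ i ∈ s, Integrable (f i) P := fun i hi => (hf i hi).integrable one_le_two
  have hg2 : MemLp (fun ω => ∑ i ∈ s, a i * f i ω) 2 P :=
    memLp_finset_sum s (fun i hi => (hf i hi).const_mul (a i))
  have hgint : (∫ ω, (∑ i ∈ s, a i * f i ω) ∂P) = ∑ i ∈ s, a i * (∫ ω, f i ω ∂P) := by
    rw [integral_finset_sum s (fun i hi => ((hfi i hi).const_mul (a i)))]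
    exact Finset.sum_congr rfl (fun i hi => integral_const_mul _ _)
  rw [variance_eq_integral hg2.aemeasurable]
  change ∫ ω, ((((fun ω => ∑ i ∈ s, a i * f i ω) - fun _ =>
        ∫ ω, (∑ i ∈ s, a i * f i ω) ∂P) ^ (2:ℕ) : Ω → ℝ) ω) ∂P = _
  have hpt : ((fun ω => ∑ i ∈ s, a i * f i ω) - fun _ =>
        ∫ ω, (∑ i ∈ s, a i * f i ω) ∂P) ^ (2:ℕ)
      = fun ω => ∑ i ∈ s, ∑ j ∈ s, (a i * a j) *
          ((f i ω - ∫ x, f i x ∂P) * (f j ω - ∫ x, f j x ∂P)) := by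
    funext ω
    simp only [Pi.pow_apply, Pi.sub_apply, hgint, ← Finset.sum_sub_distrib, ← mul_sub]
    rw [sq, Finset.sum_mul_sum]
    exact Finset.sum_congr rfl fun i _ => Finset.sum_congr rfl fun j _ => by ring
  rw [hpt]
  have hint : ∀ i ∈ s, ∀ j ∈ s, Integrable (fun ω =>
      (f i ω - ∫ x, f i x ∂P) * (f j ω - ∫ x, f j x ∂P)) P := by
    intro i hi j hj
    exact integrable_mul_of_memL2 ((hf i hi).sub (memLp_const _)) ((hf j hj).sub (memLp_const _))
  rw [integral_finset_sum s (fun i hi =>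
    integrable_finset_sum s (fun j hj => ((hint i hi j hj).const_mul _)))]
  refine Finset.sum_congr rfl fun i hi => ?_
  rw [integral_finset_sum s (fun j hj => ((hint i hi j hj).const_mul _))]
  refine Finset.sum_congr rfl fun j hj => ?_
  rw [integral_const_mul]; rfl

lemma covRV_eq_zero_of_indep {f g : Ω → ℝ} (hind : IndepFun f g P)
    (hf : MemLp f 2 P) (hg : MemLp g 2 P) : covRV P f g = 0 := by
  set a := ∫ x, f x ∂P
  set b := ∫ x, g x ∂P
  have hf' : Integrable f P := hf.integrable one_le_two
  have hg' : Integrable g P := hg.integrable one_le_two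
  have hind' : IndepFun (fun ω => f ω - a) (fun ω => g ω - b) P :=
    hind.comp (measurable_id.sub_const a) (measurable_id.sub_const b)
  have h1 : Integrable (fun ω => f ω - a) P := hf'.sub (integrable_const a)
  have h2 : Integrable (fun ω => g ω - b) P := hg'.sub (integrable_const b)
  have hmul := hind'.integral_fun_mul_eq_mul_integral h1.aestronglyMeasurable h2.aestronglyMeasurable
  have hza : ∫ ω, (f ω - a) ∂P = 0 := by
    rw [integral_sub hf' (integrable_const a), integral_const]; simp [a]
  rw [covRV]
  calc ∫ ω, (f ω - a) * (g ω - b) ∂P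
      = (∫ ω, (f ω - a) ∂P) * ∫ ω, (g ω - b) ∂P := hmul
    _ = 0 := by rw [hza, zero_mul]

variable {T : Type*} {mT : MeasurableSpace T} {k : ℕ}

lemma indepFun_blockRV (X : ℕ → Ω → T) (hX : ∀ i, Measurable (X i))
    (hXi : iIndepFun (m := fun _ => mT) X P)
    (h : (Fin k → T) → ℝ) (hh : Measurable h) (S₁ S₂ : Finset ℕ)
    (h₁ : S₁.card = k) (h₂ : S₂.card = k) (hd : Disjoint S₁ S₂) :
    IndepFun (blockRV X h S₁) (blockRV X h S₂) P := by
  classical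
  have hne : Nonempty Ω := by
    by_contra hemp
    rw [not_nonempty_iff] at hemp
    have := measure_univ (μ := P)
    simp [Set.univ_eq_empty_iff.mpr hemp] at this
  obtain ⟨ω₀⟩ := hne
  have base := hXi.indepFun_finset S₁ S₂ hd hX
  have key : ∀ (S : Finset ℕ), S.card = k → ∀ (j : Fin k),
      (S.sort (· ≤ ·)).getD (j : ℕ) 0 ∈ S := by
    intro S hS j
    have hlen : (S.sort (· ≤ ·)).length = k := by rw [Finset.length_sort, hS]
    have : (S.sort (· ≤ ·)).getD (j : ℕ) 0 ∈ S.sort (· ≤ ·) := by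
      rw [List.getD_eq_getElem _ _ (by omega)]
      exact List.getElem_mem _
    exact (Finset.mem_sort _).mp this
  set φ : ∀ S : Finset ℕ, S.card = k → ({x // x ∈ S} → T) → ℝ := fun S hS g =>
    h (fun j => g ⟨_, key S hS j⟩)
  have hφm : ∀ S hS, Measurable (φ S hS) := by
    intro S hS
    exact hh.comp (measurable_pi_lambda _ (fun j => measurable_pi_apply _))
  have hcomp : ∀ S hS, (φ S hS) ∘ (fun ω (i : {x // x ∈ S}) => X i ω) = blockRV X h S := by
    intro S hS
    funext ω
    rfl
  have := base.comp (hφm S₁ h₁) (hφm S₂ h₂)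
  rwa [hcomp S₁ h₁, hcomp S₂ h₂] at this

variable (X : ℕ → Ω → T) (h : (Fin k → T) → ℝ) (σsq : ℕ → ℝ)
    (hL2 : ∀ S : Finset ℕ, S.card = k → MemLp (blockRV X h S) 2 P)
    (hcov : ∀ S₁ S₂ : Finset ℕ, S₁.card = k → S₂.card = k →
      covRV P (blockRV X h S₁) (blockRV X h S₂) = σsq (S₁ ∩ S₂).card)

include X h hL2 hcov

lemma sigma_zero (hX : ∀ i, Measurable (X i)) (hXi : iIndepFun (m := fun _ => mT) X P)
    (hh : Measurable h) : σsq 0 = 0 := by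
  have h1 : (Finset.Ico 0 k).card = k := by simp
  have h2 : (Finset.Ico k (k+k)).card = k := by simp
  have hd : Disjoint (Finset.Ico 0 k) (Finset.Ico k (k+k)) := by
    rw [Finset.disjoint_left]
    intro x hx hx'
    rw [Finset.mem_Ico] at hx hx'
    omega
  have hind := indepFun_blockRV X hX hXi h hh _ _ h1 h2 hd
  have hz := covRV_eq_zero_of_indep hind (hL2 _ h1) (hL2 _ h2)
  rw [hcov _ _ h1 h2, Finset.disjoint_iff_inter_eq_empty.mp hd] at hz
  simpa using hz

lemma psd_design {ι : Type*} (s : Finset ι) (β : ι → Finset ℕ)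
    (hβ : ∀ i ∈ s, (β i).card = k) (a : ι → ℝ) :
    0 ≤ ∑ i ∈ s, ∑ j ∈ s, a i * a j * σsq ((β i ∩ β j).card) := by
  have hv := variance_nonneg (fun ω => ∑ i ∈ s, a i * blockRV X h (β i) ω) P
  rw [variance_weighted_sum s _ a (fun i hi => hL2 _ (hβ i hi))] at hv
  refine le_trans hv (le_of_eq ?_)
  exact Finset.sum_congr rfl fun i hi => Finset.sum_congr rfl fun j hj => by
    rw [hcov _ _ (hβ i hi) (hβ j hj)]

lemma sigma_nonneg {c : ℕ} (hck : c ≤ k) : 0 ≤ σsq c := by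
  rcases eq_or_lt_of_le hck with rfl | hlt
  · have hps := psd_design X h σsq hL2 hcov ({0} : Finset ℕ) (fun _ => Finset.Ico 0 c)
      (fun i _ => by simp [Nat.card_Ico]) (fun _ => 1)
    simpa using hps
  · set w := k - c with hw
    set B : ℕ → Finset ℕ := fun l => Finset.Ico 0 c ∪ pet c w l with hB
    have hdisjcp : ∀ l, Disjoint (Finset.Ico 0 c) (pet c w l) := by
      intro l
      rw [Finset.disjoint_left]
      intro x hx hx'
      exact absurd (lb_of_mem_pet hx') (by simpa using (Finset.mem_Ico.mp hx).2.not_ge)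
    have hcard : ∀ l, (B l).card = k := by
      intro l
      rw [hB]
      rw [Finset.card_union_of_disjoint (hdisjcp l), Nat.card_Ico, pet_card]
      omega
    have hinter : ∀ l l', l ≠ l' → B l ∩ B l' = Finset.Ico 0 c := by
      intro l l' hne
      rw [hB]
      rw [inter_eq_core (pet_disj hne) (hdisjcp l).symm (hdisjcp l'), Finset.inter_self]
    have key : ∀ M : ℕ, 0 ≤ (M:ℝ)*σsq k + ((M:ℝ)^2 - M)*σsq c := by
      intro M
      have hps := psd_design X h σsq hL2 hcov (Finset.range M) B
        (fun l _ => hcard l) (fun _ => 1)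
      have heq : ∑ l ∈ Finset.range M, ∑ l' ∈ Finset.range M,
          (1:ℝ) * 1 * σsq ((B l ∩ B l').card)
          = ∑ l ∈ Finset.range M, ∑ l' ∈ Finset.range M,
            (if l = l' then σsq k else σsq c) := by
        refine Finset.sum_congr rfl fun l _ => Finset.sum_congr rfl fun l' _ => ?_
        rw [one_mul, one_mul]
        by_cases hll : l = l'
        · subst hll; rw [if_pos rfl, Finset.inter_self, hcard]
        · rw [if_neg hll, hinter l l' hll, Nat.card_Ico, Nat.sub_zero]
      rw [heq, sum_ite_diag] at hps
      exact hps
    refine nonneg_of_nat_bound (e := -σsq k) (fun M => ?_)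
    have k1 := key (M+1)
    push_cast at k1
    nlinarith [k1, Nat.cast_nonneg (α := ℝ) M]

lemma sigma_ge_mul {c : ℕ} (hσ0 : σsq 0 = 0) (h1c : 1 ≤ c) (hck : c < k) :
    (c:ℝ) * σsq 1 ≤ σsq c := by
  have key : ∀ M : ℕ, 0 ≤ (M:ℝ)*σsq k + ((M:ℝ)^2 - M)*σsq c
      - 2*((M:ℝ)*((c:ℝ)*M)*σsq 1) + ((c:ℝ)*(M:ℝ)*σsq k + (c:ℝ)*(M:ℝ)*((M:ℝ)-1)*σsq 1) := by
    intro M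
    set w := k - c with hw
    set u := k - 1 with hu
    set N := c + M*w with hN
    set S : ℕ → Finset ℕ := fun i => Finset.Ico 0 c ∪ pet c w i with hS
    set Tb : ℕ → ℕ → Finset ℕ := fun j l => {j} ∪ pet N u (j*M + l) with hTb
    have hcN : c ≤ N := Nat.le_add_right _ _
    have hdisjcp : ∀ i, Disjoint (Finset.Ico 0 c) (pet c w i) := by
      intro i
      rw [Finset.disjoint_left]
      intro x hx hx'
      exact absurd (lb_of_mem_pet hx') (by simpa using (Finset.mem_Ico.mp hx).2.not_ge)
    have hdisjjp : ∀ j p, j < N → Disjoint ({j} : Finset ℕ) (pet N u p) := by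
      intro j p hj
      rw [Finset.disjoint_left]
      intro x hx hx'
      rw [Finset.mem_singleton] at hx
      subst hx
      exact absurd (lb_of_mem_pet hx') (by omega)
    have hdisjST : ∀ i p, i < M → Disjoint (pet c w i) (pet N u p) := by
      intro i p hi
      rw [Finset.disjoint_left]
      intro x hx hx'
      have := ub_of_mem_pet hi hx
      have := lb_of_mem_pet hx'
      omega
    have hdisjcT : ∀ p, Disjoint (Finset.Ico 0 c) (pet N u p) := by
      intro p
      rw [Finset.disjoint_left]
      intro x hx hx'
      have := lb_of_mem_pet hx'
      have := (Finset.mem_Ico.mp hx).2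
      omega
    have hScard : ∀ i, (S i).card = k := by
      intro i
      rw [hS]
      rw [Finset.card_union_of_disjoint (hdisjcp i), Nat.card_Ico, pet_card]
      omega
    have hTcard : ∀ j l, j < c → (Tb j l).card = k := by
      intro j l hj
      rw [hTb]
      rw [Finset.card_union_of_disjoint (hdisjjp j _ (lt_of_lt_of_le hj hcN)),
        Finset.card_singleton, pet_card]
      omega
    have hSS : ∀ i i', i ≠ i' → S i ∩ S i' = Finset.Ico 0 c := by
      intro i i' hne
      rw [hS]
      rw [inter_eq_core (pet_disj hne) (hdisjcp i).symm (hdisjcp i'), Finset.inter_self]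
    have hST : ∀ i j l, i < M → j < c → S i ∩ Tb j l = {j} := by
      intro i j l hi hj
      rw [hS, hTb]
      rw [inter_eq_core (hdisjST i _ hi) ?d2 (hdisjcT _)]
      · exact Finset.inter_eq_right.mpr (Finset.singleton_subset_iff.mpr
          (Finset.mem_Ico.mpr ⟨Nat.zero_le _, hj⟩))
      case d2 =>
        rw [Finset.disjoint_left]
        intro x hx hx'
        rw [Finset.mem_singleton] at hx'
        subst hx'
        exact absurd (lb_of_mem_pet hx) (by omega)
    have hTT : ∀ j l j' l', j < c → j' < c → l < M → l' < M → (j, l) ≠ (j', l') →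
        Tb j l ∩ Tb j' l' = if j = j' then {j} else ∅ := by
      intro j l j' l' hj hj' hl hl' hne
      rw [hTb]
      have hidx : j*M + l ≠ j'*M + l' := by
        by_cases hjj : j = j'
        · subst hjj
          intro heq
          exact hne (by rw [Nat.add_left_cancel heq])
        · exact idx_ne hl hl' hjj
      rw [inter_eq_core (pet_disj hidx) (hdisjjp j' _ (lt_of_lt_of_le hj' hcN)).symm
        (hdisjjp j _ (lt_of_lt_of_le hj hcN))]
      by_cases hjj : j = j'
      · subst hjj; rw [if_pos rfl, Finset.inter_self]
      · rw [if_neg hjj]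
        rw [Finset.singleton_inter_of_notMem (by simpa using hjj)]
    set s : Finset (ℕ ⊕ ℕ × ℕ) :=
      (Finset.range M).disjSum ((Finset.range c) ×ˢ (Finset.range M)) with hs
    set β : ℕ ⊕ ℕ × ℕ → Finset ℕ := Sum.elim S (fun p => Tb p.1 p.2) with hβdef
    set a : ℕ ⊕ ℕ × ℕ → ℝ := Sum.elim (fun _ => 1) (fun _ => -1) with ha
    have hβ : ∀ i ∈ s, (β i).card = k := by
      intro i hi
      rcases i with i | ⟨j, l⟩
      · exact hScard i
      · have hp : (j, l) ∈ (Finset.range c) ×ˢ (Finset.range M) := by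
          rw [hs, Finset.mem_disjSum] at hi
          simpa using hi
        rw [Finset.mem_product] at hp
        exact hTcard _ _ (by simpa using hp.1)
    have hps := psd_design X h σsq hL2 hcov s β hβ a
    rw [hs] at hps
    simp only [Finset.sum_disjSum, hβdef, ha, Sum.elim_inl, Sum.elim_inr, one_mul, mul_one,
      neg_mul, mul_neg, neg_neg, Finset.sum_neg_distrib, Finset.sum_add_distrib] at hps
    have hQ11 : ∑ i ∈ Finset.range M, ∑ i' ∈ Finset.range M, σsq ((S i ∩ S i').card)
        = (M:ℝ)*σsq k + ((M:ℝ)^2 - M)*σsq c := by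
      rw [← sum_ite_diag M (σsq k) (σsq c)]
      refine Finset.sum_congr rfl fun i _ => Finset.sum_congr rfl fun i' _ => ?_
      by_cases hii : i = i'
      · subst hii; rw [if_pos rfl, Finset.inter_self, hScard]
      · rw [if_neg hii, hSS i i' hii, Nat.card_Ico, Nat.sub_zero]
    have hQ12 : ∑ i ∈ Finset.range M, ∑ p ∈ (Finset.range c) ×ˢ (Finset.range M),
        σsq ((S i ∩ Tb p.1 p.2).card) = (M:ℝ)*((c:ℝ)*M) * σsq 1 := by
      have hin : ∀ i ∈ Finset.range M, ∑ p ∈ (Finset.range c) ×ˢ (Finset.range M),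
          σsq ((S i ∩ Tb p.1 p.2).card) = (c:ℝ)*M * σsq 1 := by
        intro i hi
        rw [Finset.mem_range] at hi
        have hconst : ∀ p ∈ (Finset.range c) ×ˢ (Finset.range M),
            σsq ((S i ∩ Tb p.1 p.2).card) = σsq 1 := by
          intro p hp
          rw [Finset.mem_product, Finset.mem_range, Finset.mem_range] at hp
          rw [hST i p.1 p.2 hi hp.1, Finset.card_singleton]
        rw [Finset.sum_congr rfl hconst, Finset.sum_const, Finset.card_product,
          Finset.card_range, Finset.card_range, nsmul_eq_mul]
        push_cast
        ring
      rw [Finset.sum_congr rfl hin, Finset.sum_const, Finset.card_range, nsmul_eq_mul]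
      ring
    have hQ21 : ∑ p ∈ (Finset.range c) ×ˢ (Finset.range M), ∑ i ∈ Finset.range M,
        σsq ((Tb p.1 p.2 ∩ S i).card) = (M:ℝ)*((c:ℝ)*M) * σsq 1 := by
      rw [← hQ12, Finset.sum_comm]
      refine Finset.sum_congr rfl fun i _ => Finset.sum_congr rfl fun p _ => ?_
      rw [Finset.inter_comm]
    have hQ22 : ∑ p ∈ (Finset.range c) ×ˢ (Finset.range M),
        ∑ q ∈ (Finset.range c) ×ˢ (Finset.range M), σsq ((Tb p.1 p.2 ∩ Tb q.1 q.2).card)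
        = (c:ℝ)*(M:ℝ)*σsq k + (c:ℝ)*(M:ℝ)*((M:ℝ)-1)*σsq 1 := by
      have hterm : ∀ p ∈ (Finset.range c) ×ˢ (Finset.range M),
          ∀ q ∈ (Finset.range c) ×ˢ (Finset.range M),
          σsq ((Tb p.1 p.2 ∩ Tb q.1 q.2).card)
            = if p.1 = q.1 then (if p.2 = q.2 then σsq k else σsq 1) else 0 := by
        rintro ⟨j, l⟩ hp ⟨j', l'⟩ hq
        rw [Finset.mem_product, Finset.mem_range, Finset.mem_range] at hp hq
        by_cases hpq : (j, l) = (j', l')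
        · rw [Prod.mk.injEq] at hpq
          obtain ⟨rfl, rfl⟩ := hpq
          simp only [Finset.inter_self]
          rw [hTcard _ _ hp.1]
          simp
        · rw [hTT j l j' l' hp.1 hq.1 hp.2 hq.2 hpq]
          by_cases hjj : j = j'
          · subst hjj
            have hll : l ≠ l' := fun hh => hpq (by rw [hh])
            simp [hll]
          · simp [hjj, hσ0]
      rw [Finset.sum_congr rfl (fun p hp => Finset.sum_congr rfl (fun q hq => hterm p hp q hq))]
      rw [Finset.sum_product]
      have hinner : ∀ j ∈ Finset.range c, ∀ l ∈ Finset.range M,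
          (∑ q ∈ (Finset.range c) ×ˢ (Finset.range M),
            if j = q.1 then (if l = q.2 then σsq k else σsq 1) else 0)
          = σsq k + ((M:ℝ) - 1) * σsq 1 := by
        intro j hj l hl
        rw [Finset.sum_product]
        rw [Finset.sum_eq_single_of_mem j hj ?h0]
        · have hsplit : ∀ l' : ℕ, (if l = l' then σsq k else σsq 1)
              = (if l = l' then (σsq k - σsq 1) else 0) + σsq 1 := by
            intro l'; split <;> ring
          simp only [if_pos rfl, hsplit, Finset.sum_add_distrib, Finset.sum_ite_eq, hl, if_true,
            Finset.sum_const, Finset.card_range, nsmul_eq_mul]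
          ring
        case h0 =>
          intro j' _ hne
          have hne' : ¬ (j = j') := fun hh => hne hh.symm
          simp [hne']
      rw [Finset.sum_congr rfl (fun j hj => Finset.sum_congr rfl (fun l hl => hinner j hj l hl))]
      simp only [Finset.sum_const, Finset.card_range, nsmul_eq_mul]
      ring
    linarith [hps, hQ11, hQ12, hQ21, hQ22]
  refine le_of_sub_nonneg ?_
  have hd := nonneg_of_nat_bound (d := σsq c - (c:ℝ)*σsq 1)
    (e := 2*(c:ℝ)*σsq 1 - (1+(c:ℝ))*σsq k) (fun M => ?_)
  · linarith [hd]
  · have k1 := key (M+1)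
    push_cast at k1
    have hMpos : (0:ℝ) < (M:ℝ) + 1 := by positivity
    nlinarith [k1, hMpos]

lemma variance_ustat (E : Finset (Finset ℕ)) (hE : ∀ S ∈ E, S.card = k) :
    variance (ustat E X h) P
      = ((E.card:ℝ)⁻¹)^2 * ∑ S ∈ E, ∑ S' ∈ E, σsq ((S ∩ S').card) := by
  have h1 : ustat E X h = ((E.card:ℝ)⁻¹) • (fun ω => ∑ S ∈ E, (1:ℝ) * blockRV X h S ω) := by
    funext ω
    simp [ustat]
  rw [h1, variance_smul, variance_weighted_sum E _ _ (fun S hS => hL2 S (hE S hS))]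
  congr 1
  refine Finset.sum_congr rfl fun S hS => Finset.sum_congr rfl fun S' hS' => ?_
  rw [one_mul, one_mul, hcov _ _ (hE S hS) (hE S' hS')]

end Aux

/-- For an `r`-equireplicate linear design `D◇` of order `k`, the
incomplete U-statistic has variance `(k²(r−1)σ₁² + k σ_k²)/(n r)`, minimal among all
incomplete U-statistics of order `k` with the same design size. -/
theorem variance_equireplicate_linear_min {Ω T : Type*} [MeasurableSpace Ω] {mT : MeasurableSpace T}
    (P : Measure Ω) [IsProbabilityMeasure P]
    (X : ℕ → Ω → T) (hXmeas : ∀ i, Measurable (X i))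
    (hXindep : iIndepFun (m := fun _ => mT) X P)
    (hXident : ∀ i j, IdentDistrib (X i) (X j) P P)
    (n k r : ℕ) (h : (Fin k → T) → ℝ) (hhmeas : Measurable h)
    (hhsymm : ∀ (e : Equiv.Perm (Fin k)) (x : Fin k → T), h (x ∘ e) = h x)
    (D : Finset (Finset ℕ)) (hDne : D.Nonempty)
    (hD : ∀ S ∈ D, S.card = k ∧ S ⊆ Finset.Icc 1 n)
    (hequi : ∀ v ∈ Finset.Icc 1 n, degree D v = r)
    (hlin : ∀ S₁ ∈ D, ∀ S₂ ∈ D, S₁ ≠ S₂ → (S₁ ∩ S₂).card ≤ 1)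
    (σsq : ℕ → ℝ)
    (hL2 : ∀ S : Finset ℕ, S.card = k → MemLp (blockRV X h S) 2 P)
    (hcov : ∀ S₁ S₂ : Finset ℕ, S₁.card = k → S₂.card = k →
      covRV P (blockRV X h S₁) (blockRV X h S₂) = σsq (S₁ ∩ S₂).card) :
    variance (ustat D X h) P
        = ((k : ℝ) ^ 2 * ((r : ℝ) - 1) * σsq 1 + (k : ℝ) * σsq k) / ((n : ℝ) * (r : ℝ)) ∧
    ∀ D' : Finset (Finset ℕ), (∀ S ∈ D', S.card = k ∧ S ⊆ Finset.Icc 1 n) →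
      D'.card = D.card →
      variance (ustat D X h) P ≤ variance (ustat D' X h) P := by
  classical
  by_cases hk0 : k = 0
  · -- degenerate case: all block variables are the same constant
    subst hk0
    have hb : ∀ (S : Finset ℕ) (ω : Ω), blockRV X h S ω = h (fun j => j.elim0) := by
      intro S ω
      unfold blockRV
      congr 1
      funext j
      exact j.elim0
    have hconst : ∀ (E : Finset (Finset ℕ)), ustat E X h
        = fun _ => (E.card : ℝ)⁻¹ * (E.card * h (fun j => j.elim0)) := by
      intro E
      funext ω
      rw [ustat]
      congr 1
      rw [Finset.sum_congr rfl (fun S _ => hb S ω), Finset.sum_const, nsmul_eq_mul]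
    have hvar0 : ∀ (E : Finset (Finset ℕ)), variance (ustat E X h) P = 0 := by
      intro E
      rw [hconst E]
      have := variance_eq_integral (μ := P)
        (X := fun _ : Ω => ((E.card : ℝ)⁻¹ * (E.card * h (fun j => j.elim0)))) aemeasurable_const
      rw [this]
      simp
    constructor
    · rw [hvar0 D]
      norm_num
    · intro D' _ _
      rw [hvar0 D, hvar0 D']
  · -- main case
    have hk1 : 1 ≤ k := Nat.one_le_iff_ne_zero.mpr hk0
    have hσ0 : σsq 0 = 0 := sigma_zero X h σsq hL2 hcov hXmeas hXindep hhmeas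
    have hσ1 : 0 ≤ σsq 1 := sigma_nonneg X h σsq hL2 hcov hk1
    obtain ⟨S₀, hS₀⟩ := hDne
    have hkn : k ≤ n := by
      have := Finset.card_le_card (hD S₀ hS₀).2
      rwa [(hD S₀ hS₀).1, Nat.card_Icc, Nat.add_sub_cancel] at this
    have hn : 0 < n := lt_of_lt_of_le hk1 hkn
    have hr : 0 < r := by
      obtain ⟨v, hv⟩ := Finset.card_pos.mp (by rw [(hD S₀ hS₀).1]; exact hk1)
      have hvI : v ∈ Finset.Icc 1 n := (hD S₀ hS₀).2 hv
      rw [← hequi v hvI]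
      exact Finset.card_pos.mpr ⟨S₀, Finset.mem_filter.mpr ⟨hS₀, hv⟩⟩
    set m := D.card with hm
    have hmpos : 0 < m := Finset.card_pos.mpr ⟨S₀, hS₀⟩
    have hmk : m * k = n * r := by
      have h1 := sum_degree n D (fun S hS => (hD S hS).2)
      rw [Finset.sum_congr rfl (fun v hv => hequi v hv), Finset.sum_const,
        Nat.card_Icc, Nat.add_sub_cancel, smul_eq_mul] at h1
      rw [Finset.sum_congr rfl (fun S hS => (hD S hS).1), Finset.sum_const, smul_eq_mul] at h1
      rw [← hm] at h1
      omega
    -- diagonal sums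
    have hdiag : ∀ (E : Finset (Finset ℕ)), (∀ S ∈ E, S.card = k) →
        ∑ S ∈ E, (S ∩ S).card = E.card * k := by
      intro E hE
      rw [Finset.sum_congr rfl (fun S hS => by rw [Finset.inter_self, hE S hS]),
        Finset.sum_const, smul_eq_mul]
    -- splitting of the double sum
    have hsplit : ∀ (E : Finset (Finset ℕ)), (∀ S ∈ E, S.card = k) →
        ∑ S ∈ E, ∑ S' ∈ E, σsq ((S ∩ S').card)
        = E.card * σsq k + ∑ S ∈ E, ∑ S' ∈ E.erase S, σsq ((S ∩ S').card) := by
      intro E hE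
      have hrow : ∀ S ∈ E, ∑ S' ∈ E, σsq ((S ∩ S').card)
          = (∑ S' ∈ E.erase S, σsq ((S ∩ S').card)) + σsq k := by
        intro S hS
        rw [← Finset.sum_erase_add E _ hS, Finset.inter_self, hE S hS]
      rw [Finset.sum_congr rfl hrow, Finset.sum_add_distrib, Finset.sum_const, nsmul_eq_mul]
      ring
    -- splitting of the ℕ-valued double sum of intersection sizes
    have hsplitN : ∀ (E : Finset (Finset ℕ)),
        ∑ S ∈ E, ∑ S' ∈ E, (S ∩ S').card
        = (∑ S ∈ E, (S ∩ S).card) + ∑ S ∈ E, ∑ S' ∈ E.erase S, (S ∩ S').card := by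
      intro E
      have hrow : ∀ S ∈ E, ∑ S' ∈ E, (S ∩ S').card
          = (∑ S' ∈ E.erase S, (S ∩ S').card) + (S ∩ S).card := by
        intro S hS
        rw [← Finset.sum_erase_add E _ hS]
      rw [Finset.sum_congr rfl hrow, Finset.sum_add_distrib]
      omega
    -- the double count for D
    have hddD : ∑ S ∈ D, ∑ S' ∈ D, (S ∩ S').card = n * r^2 := by
      rw [double_count n D (fun S hS => (hD S hS).2)]
      rw [Finset.sum_congr rfl (fun v hv => by rw [hequi v hv]), Finset.sum_const,
        Nat.card_Icc, Nat.add_sub_cancel, smul_eq_mul]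
    have hoffDN : ∑ S ∈ D, ∑ S' ∈ D.erase S, (S ∩ S').card = n * r^2 - n * r := by
      have h1 := hsplitN D
      rw [hddD, hdiag D (fun S hS => (hD S hS).1), ← hm, hmk] at h1
      omega
    have hnr_le : n * r ≤ n * r^2 := by
      have : r ≤ r^2 := by nlinarith [hr]
      exact Nat.mul_le_mul_left n this
    -- off-diagonal sum for D (linear design)
    have hoffD : ∑ S ∈ D, ∑ S' ∈ D.erase S, σsq ((S ∩ S').card)
        = σsq 1 * ((n * r^2 - n * r : ℕ) : ℝ) := by
      have hterm : ∀ S ∈ D, ∀ S' ∈ D.erase S,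
          σsq ((S ∩ S').card) = ((S ∩ S').card : ℝ) * σsq 1 := by
        intro S hS S' hS'
        have hS'D : S' ∈ D := Finset.mem_of_mem_erase hS'
        have hne : S' ≠ S := Finset.ne_of_mem_erase hS'
        have hle := hlin S hS S' hS'D (Ne.symm hne)
        interval_cases hc : (S ∩ S').card
        · rw [hσ0]; norm_num
        · norm_num
      rw [Finset.sum_congr rfl (fun S hS => Finset.sum_congr rfl (fun S' hS' =>
        hterm S hS S' hS'))]
      rw [← hoffDN]
      push_cast
      rw [Finset.mul_sum]
      refine Finset.sum_congr rfl fun S _ => ?_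
      rw [Finset.mul_sum]
      exact Finset.sum_congr rfl fun S' _ => by ring
    -- variance formula for D
    have hVD : variance (ustat D X h) P
        = ((m:ℝ)⁻¹)^2 * ((m:ℝ) * σsq k + σsq 1 * ((n * r^2 - n * r : ℕ) : ℝ)) := by
      rw [variance_ustat X h σsq hL2 hcov D (fun S hS => (hD S hS).1)]
      rw [hsplit D (fun S hS => (hD S hS).1), hoffD, ← hm]
    have hcastoff : ((n * r^2 - n * r : ℕ) : ℝ) = (m:ℝ) * k * ((r:ℝ) - 1) := by
      rw [Nat.cast_sub hnr_le]
      have hmkR : ((m:ℝ)) * (k:ℝ) = (n:ℝ) * (r:ℝ) := by exact_mod_cast hmk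
      push_cast
      nlinarith [hmkR]
    have hmR : ((m:ℝ)) ≠ 0 := Nat.cast_ne_zero.mpr hmpos.ne'
    have hkR : ((k:ℝ)) ≠ 0 := Nat.cast_ne_zero.mpr hk0
    have hmkR : ((m:ℝ)) * (k:ℝ) = (n:ℝ) * (r:ℝ) := by exact_mod_cast hmk
    constructor
    · rw [hVD, hcastoff, ← hmkR]
      field_simp
      ring
    · intro D' hD' hcard'
      have hVD' : variance (ustat D' X h) P
          = ((m:ℝ)⁻¹)^2 * ((m:ℝ) * σsq k + ∑ S ∈ D', ∑ S' ∈ D'.erase S,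
              σsq ((S ∩ S').card)) := by
        rw [variance_ustat X h σsq hL2 hcov D' (fun S hS => (hD' S hS).1)]
        rw [hsplit D' (fun S hS => (hD' S hS).1), hcard']
      -- lower bound the off-diagonal part for D'
      have hoffD'N : n * r^2 - n * r ≤ ∑ S ∈ D', ∑ S' ∈ D'.erase S, (S ∩ S').card := by
        have hdc := double_count n D' (fun S hS => (hD' S hS).2)
        have hsd : ∑ v ∈ Finset.Icc 1 n, degree D' v = n * r := by
          rw [sum_degree n D' (fun S hS => (hD' S hS).2),
            Finset.sum_congr rfl (fun S hS => (hD' S hS).1), Finset.sum_const, smul_eq_mul,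
            hcard', hmk]
        have hcs : (∑ v ∈ Finset.Icc 1 n, degree D' v)^2
            ≤ (Finset.Icc 1 n).card * ∑ v ∈ Finset.Icc 1 n, (degree D' v)^2 :=
          sq_sum_le_card_mul_sum_sq
        rw [hsd, Nat.card_Icc, Nat.add_sub_cancel] at hcs
        have hge : n * r^2 ≤ ∑ v ∈ Finset.Icc 1 n, (degree D' v)^2 := by
          have : n * (n * r^2) ≤ n * ∑ v ∈ Finset.Icc 1 n, (degree D' v)^2 := by
            calc n * (n * r^2) = (n*r)^2 := by ring
              _ ≤ n * ∑ v ∈ Finset.Icc 1 n, (degree D' v)^2 := hcs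
          exact Nat.le_of_mul_le_mul_left this hn
        have h1 := hsplitN D'
        rw [hdc, hdiag D' (fun S hS => (hD' S hS).1), hcard', hmk] at h1
        omega
      have hoffD' : σsq 1 * ((n * r^2 - n * r : ℕ) : ℝ)
          ≤ ∑ S ∈ D', ∑ S' ∈ D'.erase S, σsq ((S ∩ S').card) := by
        have hterm : ∀ S ∈ D', ∀ S' ∈ D'.erase S,
            ((S ∩ S').card : ℝ) * σsq 1 ≤ σsq ((S ∩ S').card) := by
          intro S hS S' hS'
          have hS'D : S' ∈ D' := Finset.mem_of_mem_erase hS'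
          have hne : S' ≠ S := Finset.ne_of_mem_erase hS'
          have hlt : (S ∩ S').card < k := by
            have hsub : S ∩ S' ⊆ S := Finset.inter_subset_left
            have hne2 : S ∩ S' ≠ S := by
              intro hEq
              have hsub2 : S ⊆ S' := by
                rw [← Finset.inter_eq_left]
                exact hEq
              exact hne (Finset.eq_of_subset_of_card_le hsub2
                (le_of_eq ((hD' S' hS'D).1.trans (hD' S hS).1.symm))).symm
            have := Finset.card_lt_card (ssubset_of_subset_of_ne hsub hne2)
            rwa [(hD' S hS).1] at this
          rcases Nat.eq_zero_or_pos (S ∩ S').card with hz | hpos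
          · rw [hz, hσ0]
            norm_num
          · exact sigma_ge_mul X h σsq hL2 hcov hσ0 hpos hlt
        calc σsq 1 * ((n * r^2 - n * r : ℕ) : ℝ)
            ≤ σsq 1 * ((∑ S ∈ D', ∑ S' ∈ D'.erase S, (S ∩ S').card : ℕ) : ℝ) := by
              apply mul_le_mul_of_nonneg_left _ hσ1
              exact_mod_cast hoffD'N
          _ = ∑ S ∈ D', ∑ S' ∈ D'.erase S, ((S ∩ S').card : ℝ) * σsq 1 := by
              push_cast
              rw [Finset.mul_sum]
              refine Finset.sum_congr rfl fun S _ => ?_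
              rw [Finset.mul_sum]
              exact Finset.sum_congr rfl fun S' _ => by ring
          _ ≤ ∑ S ∈ D', ∑ S' ∈ D'.erase S, σsq ((S ∩ S').card) :=
              Finset.sum_le_sum fun S hS => Finset.sum_le_sum fun S' hS' =>
                hterm S hS S' hS'
      rw [hVD, hVD']
      apply mul_le_mul_of_nonneg_left _ (by positivity)
      linarith [hoffD']

end IUStat
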